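/- arXiv:math/0010137 — 3 statements merged into one kernel-verified Lean document; each statement's English description precedes it below -/
import Mathlib

section
/- For each multiple a = m*p of a prime p, the number of integers n ≥ 1 for which a is the least integer whose factorial is divisible by p^n equals the p-adic valuation of a, i.e., the value a is attained exactly v_p(a!) − v_p((a−1)!) = v_p(a) times in the sequence n ↦ S_p(n). -/
theorem stmt_5 (p m : ℕ) (hp : p.Prime) (hm : 1 ≤ m) (a : ℕ) (ha : a = m * p)
    (S : ℕ → ℕ)
    (hS : ∀ n, IsLeast {b : ℕ | 0 < b ∧ p ^ n ∣ Nat.factorial b} (S n)) :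
    {n : ℕ | 1 ≤ n ∧ S n = a}.ncard = (Nat.factorial a).factorization p
      - (Nat.factorial (a - 1)).factorization p ∧
    (Nat.factorial a).factorization p - (Nat.factorial (a - 1)).factorization p
      = a.factorization p := by
  have hp2 := hp.two_le
  have ha2 : 2 ≤ a := by
    subst ha
    calc 2 ≤ p := hp2
    _ = 1 * p := (one_mul p).symm
    _ ≤ m * p := Nat.mul_le_mul_right p hm
  have hsucc : (a - 1) + 1 = a := by omega
  set f1 := (Nat.factorial (a - 1)).factorization p with hf1
  set f2 := (Nat.factorial a).factorization p with hf2
  have hfa : Nat.factorial a = a * Nat.factorial (a - 1) := by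
    conv_lhs => rw [← hsucc, Nat.factorial_succ, hsucc]
  have hane : a ≠ 0 := by omega
  have hkey : f2 = f1 + a.factorization p := by
    rw [hf2, hfa, Nat.factorization_mul hane (Nat.factorial_ne_zero _)]
    simp [add_comm]
    rfl
  have hsub : f2 - f1 = a.factorization p := by omega
  refine ⟨?_, hsub⟩
  have hdvd : ∀ n b, p ^ n ∣ Nat.factorial b ↔ n ≤ (Nat.factorial b).factorization p := by
    intro n b
    exact hp.pow_dvd_iff_le_factorization (Nat.factorial_ne_zero b)
  have hiff : ∀ n, (1 ≤ n ∧ S n = a) ↔ (f1 < n ∧ n ≤ f2) := by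
    intro n
    obtain ⟨⟨hpos, hd⟩, hleast⟩ := hS n
    constructor
    · rintro ⟨hn1, hSn⟩
      rw [hSn] at hd
      constructor
      · by_contra h
        push_neg at h
        have hdd : p ^ n ∣ Nat.factorial (a - 1) := (hdvd n (a - 1)).mpr h
        have := hleast ⟨by omega, hdd⟩
        omega
      · exact (hdvd n a).mp hd
    · rintro ⟨h1, h2⟩
      have hle : S n ≤ a := hleast ⟨by omega, (hdvd n a).mpr h2⟩
      have hge : a ≤ S n := by
        by_contra h
        push_neg at h
        have hdvd' : Nat.factorial (S n) ∣ Nat.factorial (a - 1) :=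
          Nat.factorial_dvd_factorial (by omega)
        have hdd := (hdvd n (a - 1)).mp (hd.trans hdvd')
        omega
      exact ⟨by omega, by omega⟩
  have hset : {n : ℕ | 1 ≤ n ∧ S n = a} = ↑(Finset.Ioc f1 f2) := by
    ext n
    simp [hiff n]
  rw [hset, Set.ncard_coe_finset, Nat.card_Ioc]
end

section
/- Every positive integer A can be written uniquely as a sum of distinct terms from the sequence p_0 = 1, p_1 = 2, p_2 = 3, p_3 = 5, ... (1 followed by the primes), using the greedy algorithm: A = p_n + r where p_n ≤ A < p_{n+1}, with the greedy representation obtained by Bertrand's postulate guaranteeing each successive remainder is less than the subtracted term. -/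
/-- The "prime base": `pb 0 = 1` and `pb (k+1)` is the `k`-th prime. -/
noncomputable def pb : ℕ → ℕ
  | 0 => 1
  | k + 1 => Nat.nth Nat.Prime k

lemma pb_strictMono : StrictMono pb := by
  have h2 : (2:ℕ) = Nat.nth Nat.Prime 0 := (Nat.nth_prime_zero_eq_two).symm
  apply strictMono_nat_of_lt_succ
  intro n
  cases n with
  | zero => show (1:ℕ) < Nat.nth Nat.Prime 0; rw [← h2]; norm_num
  | succ k =>
      show Nat.nth Nat.Prime k < Nat.nth Nat.Prime (k+1)
      exact (Nat.nth_lt_nth Nat.infinite_setOf_prime).2 (Nat.lt_succ_self k)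

lemma pb_pos (k : ℕ) : 0 < pb k := by
  have : pb 0 ≤ pb k := pb_strictMono.monotone (Nat.zero_le k)
  exact Nat.lt_of_lt_of_le (by simp [pb]) this

lemma pb_two_mul (n : ℕ) : pb (n + 1) ≤ 2 * pb n := by
  cases n with
  | zero => simp [pb, Nat.nth_prime_zero_eq_two]
  | succ k =>
      have hp : (Nat.nth Nat.Prime k).Prime := Nat.nth_mem_of_infinite Nat.infinite_setOf_prime k
      obtain ⟨q, hq, hlt, hle⟩ := Nat.exists_prime_lt_and_le_two_mul (Nat.nth Nat.Prime k)
        hp.pos.ne'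
      have : Nat.nth Nat.Prime (k+1) ≤ q := by
        by_contra h
        exact absurd (Nat.le_nth_of_lt_nth_succ (not_le.1 h) hq) (not_le.2 hlt)
      calc pb (k+1+1) = Nat.nth Nat.Prime (k+1) := rfl
        _ ≤ q := this
        _ ≤ 2 * pb (k+1) := hle

lemma pb_interval (A : ℕ) (hA : 0 < A) : ∃ n, pb n ≤ A ∧ A < pb (n + 1) := by
  have hub : ∃ m, A < pb m := ⟨A + 1, by
    have : A + 1 ≤ pb (A + 1) := pb_strictMono.le_apply; omega⟩
  classical
  have hm : A < pb (Nat.find hub) := Nat.find_spec hub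
  have hm0 : Nat.find hub ≠ 0 := by
    intro h
    rw [h] at hm
    simp [pb] at hm; omega
  obtain ⟨n, hn⟩ := Nat.exists_eq_succ_of_ne_zero hm0
  rw [hn] at hm
  refine ⟨n, ?_, hm⟩
  by_contra h
  have : Nat.find hub ≤ n := Nat.find_le (not_le.1 h)
  omega

theorem stmt_9 (A : ℕ) (hA : 0 < A) :
    ∃! S : Finset ℕ, A = ∑ k ∈ S, pb k ∧
      ∀ k ∈ S, (∑ j ∈ S.filter (· ≤ k), pb j) < pb (k + 1) := by
  classical
  induction A using Nat.strong_induction_on with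
  | _ A IH =>
  obtain ⟨n, hn1, hn2⟩ := pb_interval A hA
  set r := A - pb n with hr
  have hrlt : r < pb n := by
    have := pb_two_mul n; omega
  have hrA : r < A := by have := pb_pos n; omega
  -- a structure lemma for any valid S
  have struct : ∀ S : Finset ℕ, (A = ∑ k ∈ S, pb k ∧
      ∀ k ∈ S, (∑ j ∈ S.filter (· ≤ k), pb j) < pb (k + 1)) →
      n ∈ S ∧ (∀ k ∈ S.erase n, k < n) ∧
      r = ∑ k ∈ S.erase n, pb k ∧
      (∀ k ∈ S.erase n, (∑ j ∈ (S.erase n).filter (· ≤ k), pb j) < pb (k + 1)) := by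
    intro S ⟨hsum, hcond⟩
    have hSne : S.Nonempty := by
      rcases S.eq_empty_or_nonempty with h | h
      · rw [h] at hsum; simp at hsum; omega
      · exact h
    set m := S.max' hSne with hm
    have hmS : m ∈ S := S.max'_mem hSne
    have hfull : S.filter (· ≤ m) = S := by
      apply Finset.filter_true_of_mem
      intro x hx; exact S.le_max' x hx
    have h1 : A < pb (m + 1) := by
      have := hcond m hmS; rwa [hfull, ← hsum] at this
    have h2 : pb m ≤ A := by
      rw [hsum]; exact Finset.single_le_sum (fun i _ => Nat.zero_le _) hmS
    have hmn : m = n := by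
      by_contra h
      rcases lt_or_gt_of_ne h with h | h
      · have : pb (m+1) ≤ pb n := pb_strictMono.monotone h; omega
      · have : pb (n+1) ≤ pb m := pb_strictMono.monotone h; omega
    subst hmn
    refine ⟨hmS, ?_, ?_, ?_⟩
    · intro k hk
      have := Finset.mem_erase.1 hk
      exact lt_of_le_of_ne (S.le_max' k this.2) this.1
    · have := Finset.add_sum_erase S pb hmS
      omega
    · intro k hk
      obtain ⟨hkne, hkS⟩ := Finset.mem_erase.1 hk
      have hklt : k < m := lt_of_le_of_ne (S.le_max' k hkS) hkne
      have hfe : (S.erase m).filter (· ≤ k) = S.filter (· ≤ k) := by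
        ext x
        simp only [Finset.mem_filter, Finset.mem_erase]
        constructor
        · rintro ⟨⟨_, hx⟩, hxk⟩; exact ⟨hx, hxk⟩
        · rintro ⟨hx, hxk⟩
          exact ⟨⟨by omega, hx⟩, hxk⟩
      rw [hfe]
      exact hcond k hkS
  -- build the witness
  by_cases hr0 : r = 0
  · -- S = {n}
    refine ⟨{n}, ⟨?_, ?_⟩, ?_⟩
    · simp; omega
    · intro k hk
      simp only [Finset.mem_singleton] at hk; subst hk
      rw [Finset.filter_singleton, if_pos le_rfl, Finset.sum_singleton]
      exact lt_of_le_of_lt hn1 hn2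
    · intro S hS
      obtain ⟨hnS, _, hrsum, _⟩ := struct S hS
      have : S.erase n = ∅ := by
        by_contra h
        obtain ⟨x, hx⟩ := Finset.nonempty_of_ne_empty h
        have : pb x ≤ ∑ k ∈ S.erase n, pb k :=
          Finset.single_le_sum (fun i _ => Nat.zero_le _) hx
        have := pb_pos x; omega
      have h := Finset.insert_erase hnS
      rw [this] at h
      simpa using h.symm
  · -- use IH on r
    obtain ⟨T, ⟨hTsum, hTcond⟩, hTuniq⟩ := IH r hrA (Nat.pos_of_ne_zero hr0)
    have hTlt : ∀ k ∈ T, k < n := by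
      intro k hk
      have h1 : pb k ≤ ∑ j ∈ T, pb j :=
        Finset.single_le_sum (fun i _ => Nat.zero_le _) hk
      have : pb k < pb n := by omega
      exact pb_strictMono.lt_iff_lt.1 this
    have hnT : n ∉ T := fun h => absurd (hTlt n h) (lt_irrefl n)
    refine ⟨insert n T, ⟨?_, ?_⟩, ?_⟩
    · rw [Finset.sum_insert hnT]; omega
    · intro k hk
      rcases Finset.mem_insert.1 hk with rfl | hkT
      · have hfull : (insert k T).filter (· ≤ k) = insert k T := by
          apply Finset.filter_true_of_mem
          intro x hx
          rcases Finset.mem_insert.1 hx with rfl | hx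
          · exact le_refl x
          · exact le_of_lt (hTlt x hx)
        rw [hfull, Finset.sum_insert hnT]
        omega
      · have hkn : k < n := hTlt k hkT
        have : (insert n T).filter (· ≤ k) = T.filter (· ≤ k) := by
          rw [Finset.filter_insert, if_neg (by omega)]
        rw [this]
        exact hTcond k hkT
    · intro S hS
      obtain ⟨hnS, _, hrsum, hrcond⟩ := struct S hS
      have : S.erase n = T := hTuniq _ ⟨hrsum, hrcond⟩
      rw [← this, Finset.insert_erase hnS]
end

section
/- For m ≥ 3, the product of all integers c with 1 ≤ c < m and gcd(c, m) = 1 is congruent to ±1 modulo m; specifically it is ≡ −1 (mod m) if m = 4, p^k, or 2p^k for an odd prime p, and ≡ 1 (mod m) otherwise (Gauss's generalization of Wilson's theorem). -/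
open Finset

/-- Pairing lemma: product over a square-one set closed under mult by `c`. -/
lemma gauss_pairProd {G : Type*} [CommGroup G] [DecidableEq G] (c : G) (hc : c ≠ 1)
    (hc2 : c * c = 1) :
    ∀ s : Finset G, (∀ x ∈ s, x * x = 1) → (∀ x ∈ s, c * x ∈ s) →
      (∏ x ∈ s, x) = c ^ (s.card / 2) ∧ s.card % 2 = 0 := by
  intro s
  induction s using Finset.strongInduction with
  | _ s ih =>
    intro hsq hcl
    rcases s.eq_empty_or_nonempty with rfl | ⟨x, hx⟩
    · simp
    · have hcx : c * x ∈ s := hcl x hx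
      have hne : c * x ≠ x := by
        intro h
        exact hc (mul_right_cancel (b := x) (by rw [h, one_mul]))
      set s' := s \ {x, c * x} with hs'
      have hsub : {x, c * x} ⊆ s := by
        intro y hy
        rcases mem_insert.mp hy with rfl | hy
        · exact hx
        · rw [mem_singleton.mp hy]; exact hcx
      have hss : s' ⊂ s := Finset.sdiff_ssubset hsub (by simp)
      have hclosure : ∀ y ∈ s', c * y ∈ s' := by
        intro y hy
        rw [hs', mem_sdiff] at hy ⊢
        obtain ⟨hys, hyn⟩ := hy
        simp only [mem_insert, mem_singleton, not_or] at hyn ⊢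
        refine ⟨hcl y hys, ?_, ?_⟩
        · intro h
          apply hyn.2
          have := congrArg (c * ·) h
          simp only [← mul_assoc, hc2, one_mul] at this
          exact this
        · intro h
          exact hyn.1 (mul_left_cancel h)
      obtain ⟨hprod, hcard⟩ := ih s' hss (fun y hy => hsq y (sdiff_subset hy)) hclosure
      have hcards : s.card = s'.card + 2 := by
        rw [hs', card_sdiff_of_subset hsub, card_pair hne.symm]
        have := card_le_card hsub
        rw [card_pair hne.symm] at this
        omega
      have hps : (∏ y ∈ s, y) = (∏ y ∈ s', y) * (x * (c * x)) := by
        rw [← prod_sdiff hsub, prod_pair hne.symm, ← hs']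
      constructor
      · rw [hps, hprod]
        have hxc : x * (c * x) = c := by
          rw [mul_comm c x, ← mul_assoc, hsq x hx, one_mul]
        rw [hxc, hcards]
        have : (#s' + 2) / 2 = #s' / 2 + 1 := by omega
        rw [this, pow_succ]
      · omega

lemma gauss_castP (m : ℕ) [NeZero m] :
    ((∏ c ∈ (Finset.range m).filter (fun c => Nat.Coprime c m), c : ℕ) : ZMod m)
      = ((∏ x : (ZMod m)ˣ, x : (ZMod m)ˣ) : ZMod m) := by
  push_cast
  symm
  refine prod_bij (fun (u : (ZMod m)ˣ) _ => ((u : ZMod m)).val) ?_ ?_ ?_ ?_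
  · intro u _
    simp only [mem_filter, mem_range]
    exact ⟨ZMod.val_lt _, ZMod.val_coe_unit_coprime u⟩
  · intro a _ b _ h
    exact Units.ext (ZMod.val_injective m h)
  · intro c hc
    simp only [mem_filter, mem_range] at hc
    refine ⟨ZMod.unitOfCoprime c hc.2, mem_univ _, ?_⟩
    show ((ZMod.unitOfCoprime c hc.2 : (ZMod m)ˣ) : ZMod m).val = c
    rw [ZMod.coe_unitOfCoprime, ZMod.val_cast_of_lt hc.1]
  · intro u _
    simp [ZMod.natCast_val, ZMod.cast_id]

lemma gauss_ppow_sq {p k : ℕ} (hp : p.Prime) (hodd : Odd p) (hk : 1 ≤ k)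
    (x : ZMod (p ^ k)) (hx : x * x = 1) : x = 1 ∨ x = -1 := by
  haveI : Fact p.Prime := ⟨hp⟩
  haveI : NeZero (p ^ k) := ⟨pow_ne_zero k hp.pos.ne'⟩
  have hdvd : p ∣ p ^ k := dvd_pow_self p (by omega)
  set φ : ZMod (p ^ k) →+* ZMod p := ZMod.castHom hdvd (ZMod p) with hφ
  have key : ∀ y : ZMod (p ^ k), φ y ≠ 0 → IsUnit y := by
    intro y hy
    have hy' : ¬ p ∣ y.val := by
      intro h
      apply hy
      have : ((y.val : ℕ) : ZMod p) = 0 := (ZMod.natCast_eq_zero_iff _ _).mpr h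
      rw [ZMod.natCast_val] at this
      rwa [hφ, ZMod.castHom_apply]
    have hcop : Nat.Coprime y.val (p ^ k) :=
      Nat.Coprime.pow_right k ((hp.coprime_iff_not_dvd.mpr hy').symm)
    have := (ZMod.isUnit_iff_coprime y.val (p ^ k)).mpr hcop
    rwa [ZMod.natCast_rightInverse y] at this
  have hmul : (x - 1) * (x + 1) = 0 := by linear_combination hx
  have h2 : φ (x - 1) ≠ 0 ∨ φ (x + 1) ≠ 0 := by
    by_contra h
    push_neg at h
    have h2' : φ (x + 1) - φ (x - 1) = 0 := by rw [h.1, h.2]; ring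
    rw [← map_sub] at h2'
    have : x + 1 - (x - 1) = (2 : ZMod (p ^ k)) := by ring
    rw [this] at h2'
    have : ((2 : ℕ) : ZMod p) = 0 := by
      rw [← h2']; push_cast; rw [map_ofNat]
    have hpd := (ZMod.natCast_eq_zero_iff 2 p).mp this
    have := (Nat.prime_dvd_prime_iff_eq hp Nat.prime_two).mp hpd
    rw [Nat.odd_iff] at hodd
    omega
  rcases h2 with h | h
  · right
    have h0 : x + 1 = 0 := (key _ h).mul_right_eq_zero.mp hmul
    exact eq_neg_of_add_eq_zero_left h0
  · left
    rw [mul_comm] at hmul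
    have h0 : x - 1 = 0 := (key _ h).mul_right_eq_zero.mp hmul
    exact sub_eq_zero.mp h0

lemma gauss_good_sq (m : ℕ)
    (hgood : m = 4 ∨ (∃ p k : ℕ, p.Prime ∧ Odd p ∧ 1 ≤ k ∧ m = p ^ k) ∨
        (∃ p k : ℕ, p.Prime ∧ Odd p ∧ 1 ≤ k ∧ m = 2 * p ^ k)) :
    ∀ x : ZMod m, x * x = 1 → x = 1 ∨ x = -1 := by
  rcases hgood with rfl | ⟨p, k, hp, hodd, hk, rfl⟩ | ⟨p, k, hp, hodd, hk, rfl⟩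
  · decide
  · exact fun x hx => gauss_ppow_sq hp hodd hk x hx
  · intro x hx
    have hcop : Nat.Coprime 2 (p ^ k) := by
      apply Nat.Coprime.pow_right
      rw [Nat.prime_two.coprime_iff_not_dvd]
      rw [Nat.odd_iff] at hodd
      omega
    set E := ZMod.chineseRemainder hcop with hE
    have hx1 : (E x).1 * (E x).1 = 1 ∧ (E x).2 * (E x).2 = 1 := by
      have h := map_mul E x x
      rw [hx, map_one] at h
      constructor
      · have := congrArg Prod.fst h; simpa using this.symm
      · have := congrArg Prod.snd h; simpa using this.symm
    have hz2 : ∀ z : ZMod 2, z * z = 1 → z = 1 := by decide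
    have hfst : (E x).1 = 1 := hz2 _ hx1.1
    rcases gauss_ppow_sq hp hodd hk _ hx1.2 with h2 | h2
    · left
      have : E x = E 1 := by
        rw [map_one]
        exact Prod.ext (by simpa using hfst) (by simpa using h2)
      exact E.injective this
    · right
      have : E x = E (-1) := by
        rw [map_neg, map_one]
        refine Prod.ext ?_ ?_
        · simp only [Prod.fst_neg, Prod.fst_one]
          rw [hfst]; decide
        · simpa using h2
      exact E.injective this

lemma gauss_bad_split (m : ℕ) (hm : 3 ≤ m)
    (hbad : ¬(m = 4 ∨ (∃ p k : ℕ, p.Prime ∧ Odd p ∧ 1 ≤ k ∧ m = p ^ k) ∨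
        (∃ p k : ℕ, p.Prime ∧ Odd p ∧ 1 ≤ k ∧ m = 2 * p ^ k))) :
    (∃ a, 3 ≤ a ∧ m = 2 ^ a) ∨
      ∃ d e, Nat.Coprime d e ∧ 3 ≤ d ∧ 3 ≤ e ∧ m = d * e := by
  push_neg at hbad
  obtain ⟨h4, hpk, h2pk⟩ := hbad
  have hm0 : m ≠ 0 := by omega
  set a := m.factorization 2 with ha
  set t := m / 2 ^ a with ht
  have hsplit : m = 2 ^ a * t := (Nat.ordProj_mul_ordCompl_eq_self m 2).symm
  have htd : t ∣ m := Nat.ordCompl_dvd m 2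
  have ht0 : t ≠ 0 := by
    intro h; rw [h, mul_zero] at hsplit; omega
  have htodd : ¬ 2 ∣ t := Nat.not_dvd_ordCompl Nat.prime_two hm0
  by_cases ht1 : t = 1
  · -- m = 2 ^ a
    left
    rw [ht1, mul_one] at hsplit
    refine ⟨a, ?_, hsplit⟩
    rcases Nat.lt_or_ge a 3 with h | h
    · interval_cases a <;> norm_num at hsplit <;> omega
    · exact h
  · -- t has an odd prime factor p
    set p := t.minFac with hpdef
    have hp : p.Prime := Nat.minFac_prime ht1
    have hpt : p ∣ t := Nat.minFac_dvd t
    have hpodd : Odd p := by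
      rcases hp.eq_two_or_odd' with h | h
      · exact absurd (h ▸ hpt) htodd
      · exact h
    have hp3 : 3 ≤ p := by
      have := hp.two_le
      rw [Nat.odd_iff] at hpodd
      omega
    by_cases huniq : ∀ q : ℕ, q.Prime → q ∣ t → q = p
    · -- t = p ^ k
      have hteq : t = p ^ t.primeFactorsList.length :=
        Nat.eq_prime_pow_of_unique_prime_dvd ht0 (fun hd hdvd => huniq _ hd hdvd)
      set k := t.primeFactorsList.length with hkdef
      have hk1 : 1 ≤ k := by
        by_contra h
        rw [Nat.not_le, Nat.lt_one_iff] at h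
        rw [h, pow_zero] at hteq
        exact ht1 hteq
      rcases Nat.lt_or_ge a 2 with h | h
      · interval_cases a
        · exact absurd (by rw [hsplit, hteq]; ring : m = p ^ k) (hpk p k hp hpodd hk1)
        · exact absurd (by rw [hsplit, hteq]; ring : m = 2 * p ^ k) (h2pk p k hp hpodd hk1)
      · right
        refine ⟨2 ^ a, p ^ k, ?_, ?_, ?_, by rw [hsplit, hteq]⟩
        · exact Nat.Coprime.pow _ _ (Nat.coprime_two_left.mpr hpodd)
        · calc 3 ≤ 2 ^ 2 := by norm_num
            _ ≤ 2 ^ a := Nat.pow_le_pow_right (by norm_num) h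
        · calc 3 ≤ p := hp3
            _ = p ^ 1 := (pow_one p).symm
            _ ≤ p ^ k := Nat.pow_le_pow_right hp.pos hk1
    · -- two distinct odd primes
      push_neg at huniq
      obtain ⟨q, hq, hqt, hqp⟩ := huniq
      right
      set d := p ^ m.factorization p with hd
      refine ⟨d, m / d, ?_, ?_, ?_, ?_⟩
      · exact Nat.Coprime.pow_left _ (Nat.coprime_ordCompl hp hm0)
      · calc 3 ≤ p := hp3
          _ = p ^ 1 := (pow_one p).symm
          _ ≤ d := Nat.pow_le_pow_right hp.pos
            ((hp.factorization_pos_of_dvd hm0 (hpt.trans htd)))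
      · -- q divides m / d
        have hqm : q ∣ m := hqt.trans htd
        have hqd : Nat.Coprime q d := by
          apply Nat.Coprime.pow_right
          exact (Nat.coprime_primes hq hp).mpr hqp
        have : q ∣ m / d := by
          have hdm : d ∣ m := Nat.ordProj_dvd m p
          have : q ∣ d * (m / d) := by rwa [Nat.mul_div_cancel' hdm]
          exact (Nat.Coprime.dvd_of_dvd_mul_left hqd this)
        have hq3 : 3 ≤ q := by
          have h2 := hq.two_le
          have : q ≠ 2 := by rintro rfl; exact htodd hqt
          omega
        have hpos : 0 < m / d := Nat.div_pos (Nat.le_of_dvd (by omega) (Nat.ordProj_dvd m p))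
          (by positivity)
        calc 3 ≤ q := hq3
          _ ≤ m / d := Nat.le_of_dvd hpos this
      · exact (Nat.mul_div_cancel' (Nat.ordProj_dvd m p)).symm

lemma gauss_neg_one_ne_one (m : ℕ) (hm : 3 ≤ m) : (-1 : ZMod m) ≠ 1 := by
  intro h
  have h2 : ((2 : ℕ) : ZMod m) = 0 := by
    push_cast
    linear_combination -h
  have := (ZMod.natCast_eq_zero_iff 2 m).mp h2
  have := Nat.le_of_dvd (by norm_num) this
  omega

lemma gauss_bad_construct (m : ℕ) (hm : 3 ≤ m)
    (h : (∃ a, 3 ≤ a ∧ m = 2 ^ a) ∨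
      ∃ d e, Nat.Coprime d e ∧ 3 ≤ d ∧ 3 ≤ e ∧ m = d * e) :
    ∃ u : ZMod m, u * u = 1 ∧ u ≠ 1 ∧ u ≠ -1 := by
  rcases h with ⟨a, ha, rfl⟩ | ⟨d, e, hco, hd, he, rfl⟩
  · -- m = 2 ^ a, a ≥ 3
    haveI : NeZero (2 ^ a) := ⟨by positivity⟩
    set c : ZMod (2 ^ a) := ((2 ^ (a - 1) : ℕ) : ZMod (2 ^ a)) with hc
    refine ⟨c - 1, ?_, ?_, ?_⟩
    · have h1 : c * c = 0 := by
        rw [hc, ← Nat.cast_mul, ← pow_add]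
        rw [ZMod.natCast_eq_zero_iff]
        exact pow_dvd_pow 2 (by omega)
      have h2 : c + c = 0 := by
        rw [hc, ← Nat.cast_add, ← two_mul, ← pow_succ']
        rw [ZMod.natCast_eq_zero_iff]
        exact pow_dvd_pow 2 (by omega)
      linear_combination h1 - h2
    · intro hh
      have hc2 : c = ((2 : ℕ) : ZMod (2 ^ a)) := by
        push_cast
        linear_combination hh
      have hval := congrArg ZMod.val hc2
      rw [ZMod.val_cast_of_lt, ZMod.val_cast_of_lt] at hval
      · have : 2 ^ 2 ≤ 2 ^ (a - 1) := Nat.pow_le_pow_right (by norm_num) (by omega)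
        omega
      · calc 2 < 2 ^ 3 := by norm_num
          _ ≤ 2 ^ a := Nat.pow_le_pow_right (by norm_num) ha
      · exact Nat.pow_lt_pow_right (by norm_num) (by omega)
    · intro hh
      have hc0 : c = 0 := by linear_combination hh
      rw [hc, ZMod.natCast_eq_zero_iff] at hc0
      have := Nat.le_of_dvd (by positivity) hc0
      have : 2 ^ (a - 1) < 2 ^ a := Nat.pow_lt_pow_right (by norm_num) (by omega)
      omega
  · -- m = d * e coprime, both ≥ 3
    set E := ZMod.chineseRemainder hco with hE
    refine ⟨E.symm (-1, 1), ?_, ?_, ?_⟩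
    · rw [← map_mul]
      have : ((-1 : ZMod d), (1 : ZMod e)) * (-1, 1) = 1 := by
        rw [Prod.mk_mul_mk]
        norm_num
      rw [this, map_one]
    · intro hh
      have := congrArg E hh
      rw [RingEquiv.apply_symm_apply, map_one] at this
      have h1 := congrArg Prod.fst this
      simp only [Prod.fst_one] at h1
      exact gauss_neg_one_ne_one d hd h1
    · intro hh
      have := congrArg E hh
      rw [RingEquiv.apply_symm_apply, map_neg, map_one] at this
      have h1 := congrArg Prod.snd this
      simp only [Prod.snd_neg, Prod.snd_one] at h1
      exact gauss_neg_one_ne_one e he h1.symm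

section main
variable (m : ℕ) [NeZero m]

-- the subgroup of square-one units
def gaussK (m : ℕ) [NeZero m] : Subgroup (ZMod m)ˣ where
  carrier := {x | x * x = 1}
  one_mem' := by simp
  mul_mem' := by
    intro a b ha hb
    simp only [Set.mem_setOf_eq] at *
    calc a * b * (a * b) = (a * a) * (b * b) := mul_mul_mul_comm a b a b
      _ = 1 := by rw [ha, hb, one_mul]
  inv_mem' := by
    intro a ha
    simp only [Set.mem_setOf_eq] at *
    rw [← mul_inv_rev, ha, inv_one]

lemma gaussK_card_pow : ∃ r, Nat.card (gaussK m) = 2 ^ r := by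
  haveI : Fact (Nat.Prime 2) := ⟨Nat.prime_two⟩
  apply IsPGroup.iff_card.mp
  intro g
  exact ⟨1, by
    have hg : (g : (ZMod m)ˣ) * g = 1 := g.2
    rw [pow_one, sq]
    exact Subtype.ext (by simpa using hg)⟩
end main

lemma gaussK_card_eq (m : ℕ) [NeZero m] [DecidablePred fun x : (ZMod m)ˣ => x * x = 1] :
    Nat.card (gaussK m) = (univ.filter (fun x : (ZMod m)ˣ => x * x = 1)).card := by
  have h1 : Nat.card (gaussK m) = Nat.card {x : (ZMod m)ˣ // x * x = 1} :=
    Nat.card_congr (Equiv.subtypeEquivRight (fun x => Iff.rfl))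
  rw [h1, Nat.card_eq_fintype_card, Fintype.card_subtype]

lemma gauss_prod_eq_S (m : ℕ) [NeZero m] [DecidablePred fun x : (ZMod m)ˣ => x * x = 1] :
    (∏ x : (ZMod m)ˣ, x) = ∏ x ∈ univ.filter (fun x : (ZMod m)ˣ => x * x = 1), x := by
  rw [← prod_filter_mul_prod_filter_not univ (fun x : (ZMod m)ˣ => x * x = 1) (fun x => x)]
  have h2 : (∏ x ∈ univ.filter (fun x : (ZMod m)ˣ => ¬ x * x = 1), x) = 1 := by
    apply prod_involution (g := fun a _ => a⁻¹)
    · intro a _; exact mul_inv_cancel a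
    · intro a ha _
      rw [mem_filter] at ha
      intro h
      apply ha.2
      nth_rewrite 2 [← h]
      exact mul_inv_cancel a
    · intro a _; exact inv_inv a
    · intro a ha
      rw [mem_filter] at ha ⊢
      refine ⟨mem_univ _, ?_⟩
      intro h
      apply ha.2
      have := congrArg (fun y => y⁻¹) h
      simpa [mul_inv_rev] using this
  
  rw [h2, mul_one]
theorem stmt_14 (m : ℕ) (hm : 3 ≤ m) (P : ℕ)
    (hP : P = ∏ c ∈ (Finset.range m).filter (fun c => Nat.Coprime c m), c) :
    ((P : ZMod m) = -1 ∨ (P : ZMod m) = 1) ∧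
    ((m = 4 ∨ (∃ p k : ℕ, p.Prime ∧ Odd p ∧ 1 ≤ k ∧ m = p ^ k) ∨
        (∃ p k : ℕ, p.Prime ∧ Odd p ∧ 1 ≤ k ∧ m = 2 * p ^ k)) →
      (P : ZMod m) = -1) ∧
    (¬(m = 4 ∨ (∃ p k : ℕ, p.Prime ∧ Odd p ∧ 1 ≤ k ∧ m = p ^ k) ∨
        (∃ p k : ℕ, p.Prime ∧ Odd p ∧ 1 ≤ k ∧ m = 2 * p ^ k)) →
      (P : ZMod m) = 1) := by
  haveI : NeZero m := ⟨by omega⟩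
  have hPQ : (P : ZMod m) = ((∏ x : (ZMod m)ˣ, x : (ZMod m)ˣ) : ZMod m) := by
    rw [hP]; exact_mod_cast gauss_castP m
  set S := univ.filter (fun x : (ZMod m)ˣ => x * x = 1) with hS
  have hprodS : (∏ x : (ZMod m)ˣ, x) = ∏ x ∈ S, x := gauss_prod_eq_S m
  have hne1 : (-1 : (ZMod m)ˣ) ≠ 1 := by
    intro h
    apply gauss_neg_one_ne_one m hm
    have := congrArg (Units.val) h
    simpa using this
  have hgoodimp : (m = 4 ∨ (∃ p k : ℕ, p.Prime ∧ Odd p ∧ 1 ≤ k ∧ m = p ^ k) ∨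
        (∃ p k : ℕ, p.Prime ∧ Odd p ∧ 1 ≤ k ∧ m = 2 * p ^ k)) → (P : ZMod m) = -1 := by
    intro hg
    have honly := gauss_good_sq m hg
    have hSeq : S = {1, -1} := by
      ext x
      simp only [hS, mem_filter, mem_univ, true_and, mem_insert, mem_singleton]
      constructor
      · intro hx
        have hxz : (x : ZMod m) * x = 1 := by
          have := congrArg Units.val hx
          simpa using this
        rcases honly x hxz with h | h
        · left; exact Units.ext (by simpa using h)
        · right; exact Units.ext (by simpa using h)
      · rintro (rfl | rfl)
        · simp
        · simp
    rw [hPQ, hprodS, hSeq, prod_insert (by simpa using hne1.symm), prod_singleton, one_mul]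
    simp
  have hbadimp : ¬(m = 4 ∨ (∃ p k : ℕ, p.Prime ∧ Odd p ∧ 1 ≤ k ∧ m = p ^ k) ∨
        (∃ p k : ℕ, p.Prime ∧ Odd p ∧ 1 ≤ k ∧ m = 2 * p ^ k)) → (P : ZMod m) = 1 := by
    intro hb
    obtain ⟨u, hu2, hu1, hun⟩ := gauss_bad_construct m hm (gauss_bad_split m hm hb)
    have hunit : IsUnit u := IsUnit.of_mul_eq_one (a := u) u hu2
    set v : (ZMod m)ˣ := hunit.unit with hvdef
    have hv : (v : ZMod m) = u := hunit.unit_spec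
    have hvsq : v * v = 1 := Units.ext (by simp [hv, hu2])
    have hvS : v ∈ S := by
      rw [hS, mem_filter]
      exact ⟨mem_univ _, hvsq⟩
    have hv1 : v ≠ 1 := fun h => hu1 (by rw [← hv, h, Units.val_one])
    have hvn : v ≠ -1 := fun h => hun (by rw [← hv, h]; simp)
    have h1S : (1 : (ZMod m)ˣ) ∈ S := by rw [hS, mem_filter]; exact ⟨mem_univ _, by simp⟩
    have hnegS : (-1 : (ZMod m)ˣ) ∈ S := by
      rw [hS, mem_filter]; exact ⟨mem_univ _, by simp⟩
    have hcard3 : 3 ≤ S.card := by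
      have hsub : ({1, -1, v} : Finset (ZMod m)ˣ) ⊆ S := by
        intro y hy
        simp only [mem_insert, mem_singleton] at hy
        rcases hy with rfl | rfl | rfl
        · exact h1S
        · exact hnegS
        · exact hvS
      have hc : ({1, -1, v} : Finset (ZMod m)ˣ).card = 3 := by
        rw [card_insert_of_notMem (by simp [hne1.symm, (Ne.symm hv1)]),
          card_insert_of_notMem (by simpa using (Ne.symm hvn)), card_singleton]
      calc 3 = ({1, -1, v} : Finset (ZMod m)ˣ).card := hc.symm
        _ ≤ S.card := card_le_card hsub
    obtain ⟨r, hr⟩ := gaussK_card_pow m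
    have hcardS : S.card = 2 ^ r := by rw [← gaussK_card_eq m, hr]
    have h4 : 4 ∣ S.card := by
      have hr2 : 2 ≤ r := by
        by_contra h
        interval_cases r <;> omega
      rw [hcardS]
      calc (4 : ℕ) = 2 ^ 2 := by norm_num
        _ ∣ 2 ^ r := pow_dvd_pow 2 hr2
    have hclosure : ∀ x ∈ S, v * x ∈ S := by
      intro x hx
      rw [hS, mem_filter] at hx ⊢
      refine ⟨mem_univ _, ?_⟩
      calc v * x * (v * x) = (v * v) * (x * x) := mul_mul_mul_comm v x v x
        _ = 1 := by rw [hvsq, hx.2, one_mul]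
    obtain ⟨hprodv, -⟩ := gauss_pairProd v hv1 hvsq S
      (fun x hx => (mem_filter.mp hx).2) hclosure
    obtain ⟨j, hj⟩ := h4
    have hj2 : S.card / 2 = 2 * j := by omega
    rw [hPQ, hprodS, hprodv, hj2, pow_mul, sq, hvsq, one_pow, Units.val_one]
  refine ⟨?_, hgoodimp, hbadimp⟩
  by_cases hg : (m = 4 ∨ (∃ p k : ℕ, p.Prime ∧ Odd p ∧ 1 ≤ k ∧ m = p ^ k) ∨
        (∃ p k : ℕ, p.Prime ∧ Odd p ∧ 1 ≤ k ∧ m = 2 * p ^ k))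
  · exact Or.inl (hgoodimp hg)
  · exact Or.inr (hbadimp hg)
end
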